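/- In the homotopy braid group B̂₃, for all integers α, β, γ, δ, the element g = b₁₂^α b₁₃^β b₂₃^γ z^δ σ₂ satisfies g² = b₁₂^{α+β} b₁₃^{α+β} b₂₃^{2γ+1} z^{αγ + β(β - γ + α - 1)}, where z = [b₂₃, b₁₃]. -/

import Mathlib

/-- The commutator `[x, y] = x⁻¹ y⁻¹ x y` used in the paper. -/
def pcomm {G : Type*} [Group G] (x y : G) : G := x⁻¹ * y⁻¹ * x * y

/-- The braid relation `σ₁σ₂σ₁ = σ₂σ₁σ₂` on two generators. -/
def braidRel3 : Set (FreeGroup (Fin 2)) :=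
  { FreeGroup.of 0 * FreeGroup.of 1 * FreeGroup.of 0 *
      (FreeGroup.of 1 * FreeGroup.of 0 * FreeGroup.of 1)⁻¹ }

/-- The braid group `B₃`. -/
abbrev B3 := PresentedGroup braidRel3

/-- The generator `σ₁` of `B₃`. -/
def s1 : B3 := PresentedGroup.of 0
/-- The generator `σ₂` of `B₃`. -/
def s2 : B3 := PresentedGroup.of 1
/-- `a₁₂ = σ₁²`. -/
def a12 : B3 := s1 ^ 2
/-- `a₁₃ = σ₂σ₁²σ₂⁻¹`. -/
def a13 : B3 := s2 * s1 ^ 2 * s2⁻¹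
/-- `a₂₃ = σ₂²`. -/
def a23 : B3 := s2 ^ 2

/-- The homotopy relations in `B₃`: `[a₁₃, g⁻¹a₁₃g]` and `[a₂₃, g⁻¹a₂₃g]` for `g`
in the subgroup generated by `a₁₃` and `a₂₃`. -/
def homotopyRels3 : Set B3 :=
  { x | ∃ g ∈ Subgroup.closure {a13, a23},
        x = pcomm a13 (g⁻¹ * a13 * g) ∨ x = pcomm a23 (g⁻¹ * a23 * g) }

/-- The homotopy braid group `B̂₃`. -/
abbrev HB3 := B3 ⧸ Subgroup.normalClosure homotopyRels3

/-- The canonical projection `B₃ → B̂₃`. -/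
def pr : B3 →* HB3 := QuotientGroup.mk' _

/-- The image of `σ₁` in `B̂₃`. -/
def t1 : HB3 := pr s1
/-- The image of `σ₂` in `B̂₃`. -/
def t2 : HB3 := pr s2
/-- The image `b₁₂` of `a₁₂` in `B̂₃`. -/
def b12 : HB3 := pr a12
/-- The image `b₁₃` of `a₁₃` in `B̂₃`. -/
def b13 : HB3 := pr a13
/-- The image `b₂₃` of `a₂₃` in `B̂₃`. -/
def b23 : HB3 := pr a23
/-- `z = [b₂₃, b₁₃]`. -/
def zz : HB3 := pcomm b23 b13

section Aux

open scoped commutatorElement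

lemma pcomm_eq_one_iff {G : Type*} [Group G] (x y : G) : pcomm x y = 1 ↔ Commute x y := by
  have : pcomm x y = ⁅x⁻¹, y⁻¹⁆ := by rw [commutatorElement_def]; simp [pcomm]
  rw [this, commutatorElement_eq_one_iff_commute]
  exact ⟨fun h => by simpa using h.inv_inv, fun h => h.inv_inv⟩

variable {G : Type*} [Group G] {x y c : G}

lemma conj_base (h : y * x = x * y * c) (hcx : Commute c x) :
    ∀ n : ℤ, x ^ n * y * x ^ (-n) = y * c ^ (-n) := by
  have hp : x * y * x⁻¹ = y * c⁻¹ := by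
    calc x * y * x⁻¹ = (x * y * c) * (c⁻¹ * x⁻¹) := by group
      _ = (y * x) * (c⁻¹ * x⁻¹) := by rw [h]
      _ = (y * x) * (x⁻¹ * c⁻¹) := by rw [hcx.inv_inv.eq]
      _ = y * c⁻¹ := by group
  have hm : x⁻¹ * y * x = y * c := by rw [mul_assoc, h]; group
  intro n
  induction n using Int.induction_on with
  | zero => simp
  | succ n ih =>
      have hswap : x * c ^ (-(n:ℤ)) * x⁻¹ = c ^ (-(n:ℤ)) := by
        rw [(hcx.zpow_left (-(n:ℤ))).symm.eq]; group
      calc x ^ ((n:ℤ)+1) * y * x ^ (-((n:ℤ)+1))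
          = x * (x ^ (n:ℤ) * y * x ^ (-(n:ℤ))) * x⁻¹ := by group
        _ = x * (y * c ^ (-(n:ℤ))) * x⁻¹ := by rw [ih]
        _ = (x * y * x⁻¹) * (x * c ^ (-(n:ℤ)) * x⁻¹) := by group
        _ = (y * c⁻¹) * c ^ (-(n:ℤ)) := by rw [hp, hswap]
        _ = y * (c ^ (-1:ℤ) * c ^ (-(n:ℤ))) := by rw [zpow_neg_one]; group
        _ = y * c ^ (-((n:ℤ)+1)) := by rw [← zpow_add]; ring_nf
  | pred n ih =>
      have hswap : x⁻¹ * c ^ ((n:ℤ)) * x = c ^ ((n:ℤ)) := by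
        rw [← (hcx.zpow_left ((n:ℤ))).inv_right.eq]; group
      calc x ^ (-(n:ℤ)-1) * y * x ^ (-(-(n:ℤ)-1))
          = x⁻¹ * (x ^ (-(n:ℤ)) * y * x ^ (-(-(n:ℤ)))) * x := by group
        _ = x⁻¹ * (y * c ^ (-(-(n:ℤ)))) * x := by rw [ih]
        _ = (x⁻¹ * y * x) * (x⁻¹ * c ^ ((n:ℤ)) * x) := by rw [neg_neg]; group
        _ = (y * c) * c ^ ((n:ℤ)) := by rw [hm, hswap]
        _ = y * (c ^ (1:ℤ) * c ^ ((n:ℤ))) := by rw [zpow_one]; group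
        _ = y * c ^ (-(-(n:ℤ)-1)) := by rw [← zpow_add]; ring_nf

lemma swap_zpow (h : y * x = x * y * c) (hcx : Commute c x) (hcy : Commute c y)
    (m n : ℤ) : y ^ m * x ^ n = x ^ n * y ^ m * c ^ (m * n) := by
  have h1 : x ^ (-n) * y * x ^ n = y * c ^ n := by
    have := conj_base h hcx (-n); rwa [neg_neg] at this
  have key : x ^ (-n) * y ^ m * x ^ n = y ^ m * c ^ (m * n) := by
    calc x ^ (-n) * y ^ m * x ^ n
        = (x ^ (-n) * y * (x ^ (-n))⁻¹) ^ m := by rw [conj_zpow, zpow_neg]; group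
      _ = (y * c ^ n) ^ m := by rw [zpow_neg, inv_inv, ← zpow_neg, h1]
      _ = y ^ m * (c ^ n) ^ m := by rw [(hcy.symm.zpow_right n).mul_zpow]
      _ = y ^ m * c ^ (m * n) := by rw [← zpow_mul, mul_comm n m]
  calc y ^ m * x ^ n = x ^ n * (x ^ (-n) * y ^ m * x ^ n) := by rw [zpow_neg]; group
    _ = x ^ n * (y ^ m * c ^ (m * n)) := by rw [key]
    _ = x ^ n * y ^ m * c ^ (m * n) := by group

end Aux

section Relations

lemma braid : s1 * s2 * s1 = s2 * s1 * s2 := by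
  have h : (PresentedGroup.mk braidRel3
      (FreeGroup.of 0 * FreeGroup.of 1 * FreeGroup.of 0 *
        (FreeGroup.of 1 * FreeGroup.of 0 * FreeGroup.of 1)⁻¹)) = 1 := by
    apply (QuotientGroup.eq_one_iff _).mpr
    exact Subgroup.subset_normalClosure rfl
  simp only [map_mul, map_inv] at h
  have := mul_inv_eq_one.mp h
  simpa [s1, s2, PresentedGroup.of] using this

lemma homotopy_rel_one {x : B3} (hx : x ∈ homotopyRels3) : pr x = 1 :=
  (QuotientGroup.eq_one_iff _).mpr (Subgroup.subset_normalClosure hx)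

lemma comm1 : Commute b13 (b23⁻¹ * b13 * b23) := by
  have hx : pcomm a13 (a23⁻¹ * a13 * a23) ∈ homotopyRels3 :=
    ⟨a23, Subgroup.subset_closure (by simp), Or.inl rfl⟩
  have h := homotopy_rel_one hx
  rw [← pcomm_eq_one_iff]
  simpa [pcomm, b13, b23, map_mul, map_inv, mul_assoc] using h

lemma comm2 : Commute b23 (b13⁻¹ * b23 * b13) := by
  have hx : pcomm a23 (a13⁻¹ * a23 * a13) ∈ homotopyRels3 :=
    ⟨a13, Subgroup.subset_closure (by simp), Or.inr rfl⟩
  have h := homotopy_rel_one hx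
  rw [← pcomm_eq_one_iff]
  simpa [pcomm, b13, b23, map_mul, map_inv, mul_assoc] using h

lemma z_comm_B : Commute zz b13 := by
  have hz : zz = (b23⁻¹ * b13 * b23)⁻¹ * b13 := by unfold zz pcomm; group
  rw [hz]
  exact Commute.mul_left comm1.symm.inv_left (Commute.refl b13)

lemma z_comm_C : Commute zz b23 := by
  have hz : zz = b23⁻¹ * (b13⁻¹ * b23 * b13) := by unfold zz pcomm; group
  rw [hz]
  exact Commute.mul_left (Commute.refl b23).inv_left comm2.symm

lemma braidH : t1 * t2 * t1 = t2 * t1 * t2 := by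
  have := congrArg pr braid
  simpa [map_mul, t1, t2] using this

lemma hb12 : b12 = t1 ^ 2 := by simp [b12, a12, t1, map_pow]
lemma hb13 : b13 = t2 * t1 ^ 2 * t2⁻¹ := by simp [b13, a13, t2, t1, map_mul, map_pow]
lemma hb23 : b23 = t2 ^ 2 := by simp [b23, a23, t2, map_pow]

lemma ddH : b12 * b13 * b23 = (t1 * t2 * t1) * (t1 * t2 * t1) := by
  rw [hb12, hb13, hb23]; simp only [pow_two]
  calc t1 * t1 * (t2 * (t1 * t1) * t2⁻¹) * (t2 * t2)
      = t1 * (t1 * t2 * t1) * (t1 * t2) := by group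
    _ = t1 * (t2 * t1 * t2) * (t1 * t2) := by rw [braidH]
    _ = (t1 * t2 * t1) * (t2 * t1 * t2) := by group
    _ = (t1 * t2 * t1) * (t1 * t2 * t1) := by rw [braidH]

lemma wH1 : (t1 * t2 * t1) * t1 = t2 * (t1 * t2 * t1) := by
  calc (t1 * t2 * t1) * t1 = (t2 * t1 * t2) * t1 := by rw [braidH]
    _ = t2 * (t1 * t2 * t1) := by group

lemma wH2 : (t1 * t2 * t1) * t2 = t1 * (t1 * t2 * t1) := by
  calc (t1 * t2 * t1) * t2 = t1 * (t2 * t1 * t2) := by group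
    _ = t1 * (t1 * t2 * t1) := by rw [braidH]

lemma dd_comm_t1 : Commute (b12 * b13 * b23) t1 := by
  rw [Commute, SemiconjBy, ddH]
  calc (t1 * t2 * t1) * (t1 * t2 * t1) * t1
      = (t1 * t2 * t1) * ((t1 * t2 * t1) * t1) := by group
    _ = (t1 * t2 * t1) * (t2 * (t1 * t2 * t1)) := by rw [wH1]
    _ = ((t1 * t2 * t1) * t2) * (t1 * t2 * t1) := by group
    _ = (t1 * (t1 * t2 * t1)) * (t1 * t2 * t1) := by rw [wH2]
    _ = t1 * ((t1 * t2 * t1) * (t1 * t2 * t1)) := by group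

lemma dd_comm_t2 : Commute (b12 * b13 * b23) t2 := by
  rw [Commute, SemiconjBy, ddH]
  calc (t1 * t2 * t1) * (t1 * t2 * t1) * t2
      = (t1 * t2 * t1) * ((t1 * t2 * t1) * t2) := by group
    _ = (t1 * t2 * t1) * (t1 * (t1 * t2 * t1)) := by rw [wH2]
    _ = ((t1 * t2 * t1) * t1) * (t1 * t2 * t1) := by group
    _ = (t2 * (t1 * t2 * t1)) * (t1 * t2 * t1) := by rw [wH1]
    _ = t2 * ((t1 * t2 * t1) * (t1 * t2 * t1)) := by group

lemma dd_comm_A : Commute (b12 * b13 * b23) b12 := by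
  rw [hb12]; exact dd_comm_t1.pow_right 2

lemma dd_comm_B : Commute (b12 * b13 * b23) b13 := by
  rw [hb13]
  exact ((dd_comm_t2.mul_right (dd_comm_t1.pow_right 2)).mul_right dd_comm_t2.inv_right)

lemma dd_comm_C : Commute (b12 * b13 * b23) b23 := by
  rw [hb23]; exact dd_comm_t2.pow_right 2

lemma dd_comm_z : Commute (b12 * b13 * b23) zz := by
  unfold zz pcomm
  exact ((dd_comm_C.inv_right.mul_right dd_comm_B.inv_right).mul_right
    dd_comm_C).mul_right dd_comm_B

lemma hb12d : b12 = (b12 * b13 * b23) * b23⁻¹ * b13⁻¹ := by group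

lemma z_comm_A : Commute zz b12 := by
  rw [hb12d]
  exact (dd_comm_z.symm.mul_right z_comm_C.inv_right).mul_right z_comm_B.inv_right

lemma hCB : b23 * b13 = b13 * b23 * zz := by unfold zz pcomm; group

lemma conjB : b13 * b23⁻¹ * b13⁻¹ = b23⁻¹ * zz := by
  have h1 : b13⁻¹ * b23 * b13 = b23 * zz := by
    calc b13⁻¹ * b23 * b13 = b13⁻¹ * (b23 * b13) := by group
      _ = b13⁻¹ * (b13 * b23 * zz) := by rw [hCB]
      _ = b23 * zz := by group
  have h2 : b23 = b13 * b23 * (zz * b13⁻¹) := by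
    calc b23 = b13 * (b13⁻¹ * b23 * b13) * b13⁻¹ := by group
      _ = b13 * (b23 * zz) * b13⁻¹ := by rw [h1]
      _ = b13 * b23 * (zz * b13⁻¹) := by group
  have h3 : b13 * b23 * b13⁻¹ = b23 * zz⁻¹ := by
    rw [z_comm_B.inv_right.eq] at h2
    calc b13 * b23 * b13⁻¹ = (b13 * b23 * (b13⁻¹ * zz)) * zz⁻¹ := by group
      _ = b23 * zz⁻¹ := by rw [← h2]
  calc b13 * b23⁻¹ * b13⁻¹ = (b13 * b23 * b13⁻¹)⁻¹ := by group
    _ = (b23 * zz⁻¹)⁻¹ := by rw [h3]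
    _ = zz * b23⁻¹ := by group
    _ = b23⁻¹ * zz := by rw [z_comm_C.inv_right.eq]

lemma hBA : b13 * b12 = b12 * b13 * zz := by
  have hc : Commute b13 (b12 * b13 * b23) := dd_comm_B.symm
  calc b13 * b12 = b13 * ((b12 * b13 * b23) * b23⁻¹ * b13⁻¹) := by rw [← hb12d]
    _ = (b13 * (b12 * b13 * b23)) * (b23⁻¹ * b13⁻¹) := by group
    _ = ((b12 * b13 * b23) * b13) * (b23⁻¹ * b13⁻¹) := by rw [hc.eq]
    _ = (b12 * b13 * b23) * (b13 * b23⁻¹ * b13⁻¹) := by group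
    _ = (b12 * b13 * b23) * (b23⁻¹ * zz) := by rw [conjB]
    _ = ((b12 * b13 * b23) * b23⁻¹ * b13⁻¹) * b13 * zz := by group
    _ = b12 * b13 * zz := by rw [← hb12d]

lemma hCA : b23 * b12 = b12 * b23 * zz⁻¹ := by
  have hc : Commute b23 (b12 * b13 * b23) := dd_comm_C.symm
  have hz : b23⁻¹ * b13⁻¹ * b23 = zz * b13⁻¹ := by unfold zz pcomm; group
  calc b23 * b12 = b23 * ((b12 * b13 * b23) * b23⁻¹ * b13⁻¹) := by rw [← hb12d]
    _ = (b23 * (b12 * b13 * b23)) * (b23⁻¹ * b13⁻¹) := by group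
    _ = ((b12 * b13 * b23) * b23) * (b23⁻¹ * b13⁻¹) := by rw [hc.eq]
    _ = (b12 * b13 * b23) * (b13⁻¹ * zz) * zz⁻¹ := by group
    _ = (b12 * b13 * b23) * (zz * b13⁻¹) * zz⁻¹ := by rw [← z_comm_B.inv_right.eq]
    _ = (b12 * b13 * b23) * (b23⁻¹ * b13⁻¹ * b23) * zz⁻¹ := by rw [← hz]
    _ = ((b12 * b13 * b23) * b23⁻¹ * b13⁻¹) * b23 * zz⁻¹ := by group
    _ = b12 * b23 * zz⁻¹ := by rw [← hb12d]

end Relations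

section Conj

lemma hTA : t2 * b12 = b13 * t2 := by
  have h : s2 * a12 = a13 * s2 := by unfold a12 a13; group
  simpa [t2, b12, b13, map_mul] using congrArg pr h

lemma hTC : t2 * b23 = b23 * t2 := by
  have h : s2 * a23 = a23 * s2 := by unfold a23; group
  simpa [t2, b23, map_mul] using congrArg pr h

lemma hTB0 : t2 * b13 = b23 * b12 * b23⁻¹ * t2 := by
  have h : s2 * a13 = a23 * a12 * a23⁻¹ * s2 := by
    unfold a12 a13 a23; simp only [pow_two]; group
  simpa [t2, b12, b13, b23, map_mul] using congrArg pr h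

lemma conjCA : b23 * b12 * b23⁻¹ = b12 * zz⁻¹ := by
  calc b23 * b12 * b23⁻¹ = (b23 * b12) * b23⁻¹ := by group
    _ = (b12 * b23 * zz⁻¹) * b23⁻¹ := by rw [hCA]
    _ = b12 * b23 * (zz⁻¹ * b23⁻¹) := by group
    _ = b12 * b23 * (b23⁻¹ * zz⁻¹) := by rw [z_comm_C.inv_inv.eq]
    _ = b12 * zz⁻¹ := by group

lemma hTB : t2 * b13 = b12 * zz⁻¹ * t2 := by rw [hTB0, conjCA]

lemma hTz : t2 * zz = zz⁻¹ * t2 := by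
  have e1 : b12⁻¹ * b23 * b12 = b23 * zz⁻¹ := by
    calc b12⁻¹ * b23 * b12 = b12⁻¹ * (b23 * b12) := by group
      _ = b12⁻¹ * (b12 * b23 * zz⁻¹) := by rw [hCA]
      _ = b23 * zz⁻¹ := by group
  have hTzinv : t2 * b13⁻¹ = zz * b12⁻¹ * t2 := by
    calc t2 * b13⁻¹ = ((t2 * b13) * t2⁻¹)⁻¹ * t2 := by group
      _ = ((b12 * zz⁻¹ * t2) * t2⁻¹)⁻¹ * t2 := by rw [hTB]
      _ = zz * b12⁻¹ * t2 := by group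
  calc t2 * zz = (t2 * b23⁻¹) * b13⁻¹ * b23 * b13 := by unfold zz pcomm; group
    _ = (b23⁻¹ * t2) * b13⁻¹ * b23 * b13 := by
        have : t2 * b23⁻¹ = b23⁻¹ * t2 := by
          calc t2 * b23⁻¹ = b23⁻¹ * (b23 * t2) * b23⁻¹ := by group
            _ = b23⁻¹ * (t2 * b23) * b23⁻¹ := by rw [hTC]
            _ = b23⁻¹ * t2 := by group
        rw [this]
    _ = b23⁻¹ * (t2 * b13⁻¹) * b23 * b13 := by group
    _ = b23⁻¹ * (zz * b12⁻¹ * t2) * b23 * b13 := by rw [hTzinv]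
    _ = b23⁻¹ * zz * b12⁻¹ * (t2 * b23) * b13 := by group
    _ = b23⁻¹ * zz * b12⁻¹ * (b23 * t2) * b13 := by rw [hTC]
    _ = b23⁻¹ * zz * (b12⁻¹ * b23 * b12) * b12⁻¹ * (t2 * b13) := by group
    _ = b23⁻¹ * zz * (b23 * zz⁻¹) * b12⁻¹ * (b12 * zz⁻¹ * t2) := by rw [e1, hTB]
    _ = b23⁻¹ * (zz * b23) * zz⁻¹ * zz⁻¹ * t2 := by group
    _ = b23⁻¹ * (b23 * zz) * zz⁻¹ * zz⁻¹ * t2 := by rw [z_comm_C.eq]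
    _ = zz⁻¹ * t2 := by group

lemma hTAp (n : ℤ) : t2 * b12 ^ n = b13 ^ n * t2 :=
  ((SemiconjBy.zpow_right (hTA : SemiconjBy t2 b12 b13) n)).eq

lemma hTCp (n : ℤ) : t2 * b23 ^ n = b23 ^ n * t2 :=
  ((SemiconjBy.zpow_right (hTC : SemiconjBy t2 b23 b23) n)).eq

lemma hTzp (d : ℤ) : t2 * zz ^ d = zz ^ (-d) * t2 := by
  have := ((SemiconjBy.zpow_right (hTz : SemiconjBy t2 zz zz⁻¹) d)).eq
  rwa [inv_zpow, ← zpow_neg] at this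

lemma hTBp (n : ℤ) : t2 * b13 ^ n = b12 ^ n * zz ^ (-n) * t2 := by
  have := ((SemiconjBy.zpow_right (hTB : SemiconjBy t2 b13 (b12 * zz⁻¹)) n)).eq
  rwa [(z_comm_A.symm.inv_right.mul_zpow n), inv_zpow, ← zpow_neg] at this

end Conj

section SortLemmas

lemma SwBA (m n : ℤ) : b13 ^ m * b12 ^ n = b12 ^ n * b13 ^ m * zz ^ (m * n) :=
  swap_zpow hBA z_comm_A z_comm_B m n

lemma SwCA (m n : ℤ) : b23 ^ m * b12 ^ n = b12 ^ n * b23 ^ m * zz ^ (-(m * n)) := by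
  have := swap_zpow hCA z_comm_A.inv_left z_comm_C.inv_left m n
  rwa [inv_zpow, ← zpow_neg] at this

lemma SwCB (m n : ℤ) : b23 ^ m * b13 ^ n = b13 ^ n * b23 ^ m * zz ^ (m * n) :=
  swap_zpow hCB z_comm_B z_comm_C m n

-- simp set for normalization: push t2 right, sort A < B < C < z, merge powers
lemma L1 (n : ℤ) (w : HB3) : t2 * (b12 ^ n * w) = b13 ^ n * (t2 * w) := by
  rw [← mul_assoc, hTAp, mul_assoc]
lemma L2 (n : ℤ) (w : HB3) : t2 * (b13 ^ n * w) = b12 ^ n * (zz ^ (-n) * (t2 * w)) := by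
  rw [← mul_assoc, hTBp]; group
lemma L3 (n : ℤ) (w : HB3) : t2 * (b23 ^ n * w) = b23 ^ n * (t2 * w) := by
  rw [← mul_assoc, hTCp, mul_assoc]
lemma L4 (d : ℤ) (w : HB3) : t2 * (zz ^ d * w) = zz ^ (-d) * (t2 * w) := by
  rw [← mul_assoc, hTzp, mul_assoc]
lemma L5 : t2 * t2 = b23 ^ (1 : ℤ) := by rw [zpow_one, hb23, pow_two]

lemma S1 (m n : ℤ) (w : HB3) :
    b13 ^ m * (b12 ^ n * w) = b12 ^ n * (b13 ^ m * (zz ^ (m * n) * w)) := by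
  rw [← mul_assoc, SwBA]; group
lemma S1' (m n : ℤ) : b13 ^ m * b12 ^ n = b12 ^ n * (b13 ^ m * zz ^ (m * n)) := by
  rw [SwBA]; group
lemma S2 (m n : ℤ) (w : HB3) :
    b23 ^ m * (b12 ^ n * w) = b12 ^ n * (b23 ^ m * (zz ^ (-(m * n)) * w)) := by
  rw [← mul_assoc, SwCA]; group
lemma S2' (m n : ℤ) : b23 ^ m * b12 ^ n = b12 ^ n * (b23 ^ m * zz ^ (-(m * n))) := by
  rw [SwCA]; group
lemma S3 (m n : ℤ) (w : HB3) :
    b23 ^ m * (b13 ^ n * w) = b13 ^ n * (b23 ^ m * (zz ^ (m * n) * w)) := by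
  rw [← mul_assoc, SwCB]; group
lemma S3' (m n : ℤ) : b23 ^ m * b13 ^ n = b13 ^ n * (b23 ^ m * zz ^ (m * n)) := by
  rw [SwCB]; group

lemma Z1 (d n : ℤ) (w : HB3) : zz ^ d * (b12 ^ n * w) = b12 ^ n * (zz ^ d * w) := by
  rw [← mul_assoc, (z_comm_A.zpow_zpow d n).eq, mul_assoc]
lemma Z1' (d n : ℤ) : zz ^ d * b12 ^ n = b12 ^ n * zz ^ d := (z_comm_A.zpow_zpow d n).eq
lemma Z2 (d n : ℤ) (w : HB3) : zz ^ d * (b13 ^ n * w) = b13 ^ n * (zz ^ d * w) := by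
  rw [← mul_assoc, (z_comm_B.zpow_zpow d n).eq, mul_assoc]
lemma Z2' (d n : ℤ) : zz ^ d * b13 ^ n = b13 ^ n * zz ^ d := (z_comm_B.zpow_zpow d n).eq
lemma Z3 (d n : ℤ) (w : HB3) : zz ^ d * (b23 ^ n * w) = b23 ^ n * (zz ^ d * w) := by
  rw [← mul_assoc, (z_comm_C.zpow_zpow d n).eq, mul_assoc]
lemma Z3' (d n : ℤ) : zz ^ d * b23 ^ n = b23 ^ n * zz ^ d := (z_comm_C.zpow_zpow d n).eq

lemma M1 (a b : ℤ) (w : HB3) : b12 ^ a * (b12 ^ b * w) = b12 ^ (a + b) * w := by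
  rw [← mul_assoc, ← zpow_add]
lemma M1' (a b : ℤ) : b12 ^ a * b12 ^ b = b12 ^ (a + b) := (zpow_add b12 a b).symm
lemma M2 (a b : ℤ) (w : HB3) : b13 ^ a * (b13 ^ b * w) = b13 ^ (a + b) * w := by
  rw [← mul_assoc, ← zpow_add]
lemma M2' (a b : ℤ) : b13 ^ a * b13 ^ b = b13 ^ (a + b) := (zpow_add b13 a b).symm
lemma M3 (a b : ℤ) (w : HB3) : b23 ^ a * (b23 ^ b * w) = b23 ^ (a + b) * w := by
  rw [← mul_assoc, ← zpow_add]
lemma M3' (a b : ℤ) : b23 ^ a * b23 ^ b = b23 ^ (a + b) := (zpow_add b23 a b).symm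
lemma M4 (a b : ℤ) (w : HB3) : zz ^ a * (zz ^ b * w) = zz ^ (a + b) * w := by
  rw [← mul_assoc, ← zpow_add]
lemma M4' (a b : ℤ) : zz ^ a * zz ^ b = zz ^ (a + b) := (zpow_add zz a b).symm

end SortLemmas

/-- The square of `g = b₁₂^α b₁₃^β b₂₃^γ z^δ σ₂` in `B̂₃`. -/
theorem square_formula (α β γ δ : ℤ) :
    (b12 ^ α * b13 ^ β * b23 ^ γ * zz ^ δ * t2) ^ 2 =
      b12 ^ (α + β) * b13 ^ (α + β) * b23 ^ (2 * γ + 1) *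
        zz ^ (α * γ + β * (β - γ + α - 1)) := by
  rw [pow_two]
  simp only [mul_assoc, L1, L2, L3, L4, L5, S1, S1', S2, S2', S3, S3',
    Z1, Z1', Z2, Z2', Z3, Z3', M1, M1', M2, M2', M3, M3', M4, M4']
  congr 1
  rw [show β + α = α + β from by ring, show γ + (γ + 1) = 2 * γ + 1 from by ring,
    show β * β + (γ * α + (-(γ * β) + (δ + (α * β + (-β + -δ)))))
        = α * γ + β * (β - γ + α - 1) from by ring]
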